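/- Let ξ ≥ 0 be a random variable with E[ξ] ∈ (0,∞). For every t ≥ 0, the map x ↦ E[exp(−t·(ξ/(1+xξ))/E[ξ/(1+xξ)])] is non-increasing on (0,1). -/

import Mathlib

open MeasureTheory

/-- Key pointwise convexity inequality.  With `v = c*s/(1+d*s)` and
`s0 = max 0 ((c-1)/d)`, we have `exp (-t*v) ≤ exp (-t*s) + f'(s0) * (v - s)`. -/
lemma key_ineq (t : ℝ) (ht : 0 ≤ t) (c d s : ℝ) (hc : 0 < c) (hd : 0 < d) (hs : 0 ≤ s) :
    Real.exp (-t * (c * s / (1 + d * s))) ≤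
      Real.exp (-t * s) +
        (-t * Real.exp (-t * max 0 ((c - 1) / d))) * (c * s / (1 + d * s) - s) := by
  set s0 : ℝ := max 0 ((c - 1) / d) with hs0
  set v : ℝ := c * s / (1 + d * s) with hv
  have h1 : (0:ℝ) < 1 + d * s := by positivity
  have hv0 : 0 ≤ v := by positivity
  have hexp : Real.exp (-t * v) * (t * (v - s) + 1) ≤ Real.exp (-t * s) := by
    have h := Real.add_one_le_exp (t * (v - s))
    calc Real.exp (-t * v) * (t * (v - s) + 1)
        ≤ Real.exp (-t * v) * Real.exp (t * (v - s)) :=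
          mul_le_mul_of_nonneg_left h (Real.exp_pos _).le
      _ = Real.exp (-t * s) := by rw [← Real.exp_add]; ring_nf
  have hsign : t * ((Real.exp (-t * s0) - Real.exp (-t * v)) * (v - s)) ≤ 0 := by
    rcases le_total (d * s) (c - 1) with h | h
    · have hvs : s ≤ v := by
        rw [hv, le_div_iff₀ h1]; nlinarith
      have hvle : v ≤ s0 := by
        have h2 : v ≤ (c - 1) / d := by
          rw [hv, div_le_div_iff₀ h1 hd]; nlinarith
        exact h2.trans (le_max_right _ _)
      have he : Real.exp (-t * s0) ≤ Real.exp (-t * v) :=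
        Real.exp_le_exp.mpr (by nlinarith)
      nlinarith [mul_nonneg ht (mul_nonneg (sub_nonneg.mpr he) (sub_nonneg.mpr hvs))]
    · have hvs : v ≤ s := by
        rw [hv, div_le_iff₀ h1]; nlinarith
      have hvge : s0 ≤ v := by
        apply max_le hv0
        rw [hv, div_le_div_iff₀ hd h1]; nlinarith
      have he : Real.exp (-t * v) ≤ Real.exp (-t * s0) :=
        Real.exp_le_exp.mpr (by nlinarith)
      nlinarith [mul_nonneg ht (mul_nonneg (sub_nonneg.mpr he) (sub_nonneg.mpr hvs))]
  nlinarith [hexp, hsign]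

lemma aux_den {Ω : Type*} (ξ : Ω → ℝ) (hpos : ∀ ω, 0 ≤ ξ ω) (a : ℝ) (ha : 0 ≤ a) (ω : Ω) :
    (0:ℝ) < 1 + a * ξ ω := by nlinarith [hpos ω]

lemma aux_meas {Ω : Type*} [MeasurableSpace Ω] (ξ : Ω → ℝ) (hmeas : Measurable ξ) (a : ℝ) :
    Measurable (fun ω => ξ ω / (1 + a * ξ ω)) :=
  hmeas.div (measurable_const.add (measurable_const.mul hmeas))

lemma aux_int {Ω : Type*} [MeasurableSpace Ω] (μ : Measure Ω) (ξ : Ω → ℝ)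
    (hmeas : Measurable ξ) (hpos : ∀ ω, 0 ≤ ξ ω) (hint : Integrable ξ μ)
    (a : ℝ) (ha : 0 ≤ a) :
    Integrable (fun ω => ξ ω / (1 + a * ξ ω)) μ := by
  apply hint.mono (aux_meas ξ hmeas a).aestronglyMeasurable
  filter_upwards with ω
  have hden := aux_den ξ hpos a ha ω
  rw [Real.norm_eq_abs, Real.norm_eq_abs, abs_of_nonneg (hpos ω),
    abs_of_nonneg (div_nonneg (hpos ω) hden.le)]
  exact div_le_self (hpos ω) (by nlinarith [hpos ω, mul_nonneg ha (hpos ω)])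

lemma aux_pos {Ω : Type*} [MeasurableSpace Ω] (μ : Measure Ω) (ξ : Ω → ℝ)
    (hmeas : Measurable ξ) (hpos : ∀ ω, 0 ≤ ξ ω) (hint : Integrable ξ μ)
    (hmean : 0 < ∫ ω, ξ ω ∂μ) (a : ℝ) (ha : 0 ≤ a) :
    0 < ∫ ω, ξ ω / (1 + a * ξ ω) ∂μ := by
  have hden := aux_den ξ hpos a ha
  rw [integral_pos_iff_support_of_nonneg
    (fun ω => div_nonneg (hpos ω) (hden ω).le) (aux_int μ ξ hmeas hpos hint a ha)]
  have hsupp : Function.support (fun ω => ξ ω / (1 + a * ξ ω)) = Function.support ξ := by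
    ext ω
    simp only [Function.mem_support]
    constructor
    · intro h hξ
      exact h (by rw [hξ, zero_div])
    · intro h
      exact div_ne_zero h (hden ω).ne'
  rw [hsupp]
  rw [← integral_pos_iff_support_of_nonneg hpos hint]
  exact hmean

lemma aux_exp_int {Ω : Type*} [MeasurableSpace Ω] (μ : Measure Ω) [IsProbabilityMeasure μ]
    (ξ : Ω → ℝ) (hmeas : Measurable ξ) (hpos : ∀ ω, 0 ≤ ξ ω)
    (t : ℝ) (ht : 0 ≤ t) (a m : ℝ) (ha : 0 ≤ a) (hm : 0 < m) :
    Integrable (fun ω => Real.exp (-t * (ξ ω / (1 + a * ξ ω)) / m)) μ := by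
  apply Integrable.mono' (integrable_const (1:ℝ))
  · exact ((((aux_meas ξ hmeas a).const_mul (-t)).div_const m).exp).aestronglyMeasurable
  · filter_upwards with ω
    rw [Real.norm_eq_abs, abs_of_pos (Real.exp_pos _)]
    have hden := aux_den ξ hpos a ha ω
    have : -t * (ξ ω / (1 + a * ξ ω)) / m ≤ 0 := by
      apply div_nonpos_of_nonpos_of_nonneg _ hm.le
      exact mul_nonpos_of_nonpos_of_nonneg (by linarith) (div_nonneg (hpos ω) hden.le)
    calc Real.exp (-t * (ξ ω / (1 + a * ξ ω)) / m) ≤ Real.exp 0 :=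
          Real.exp_le_exp.mpr this
      _ = 1 := Real.exp_zero

theorem stmt3 {Ω : Type*} [MeasurableSpace Ω] (μ : Measure Ω) [IsProbabilityMeasure μ]
    (ξ : Ω → ℝ) (hmeas : Measurable ξ) (hpos : ∀ ω, 0 ≤ ξ ω)
    (hint : Integrable ξ μ) (hmean : 0 < ∫ ω, ξ ω ∂μ)
    (t : ℝ) (ht : 0 ≤ t) :
    AntitoneOn (fun x : ℝ =>
        ∫ ω, Real.exp (-t * (ξ ω / (1 + x * ξ ω)) /
          (∫ ω', ξ ω' / (1 + x * ξ ω') ∂μ)) ∂μ)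
      (Set.Ioo 0 1) := by
  intro x hx y hy hxy
  rcases eq_or_lt_of_le hxy with rfl | hlt
  · exact le_refl _
  simp only
  have hx0 : (0:ℝ) ≤ x := hx.1.le
  have hy0 : (0:ℝ) ≤ y := hy.1.le
  set mx : ℝ := ∫ ω', ξ ω' / (1 + x * ξ ω') ∂μ with hmx
  set my : ℝ := ∫ ω', ξ ω' / (1 + y * ξ ω') ∂μ with hmy
  have hmxpos : 0 < mx := aux_pos μ ξ hmeas hpos hint hmean x hx0
  have hmypos : 0 < my := aux_pos μ ξ hmeas hpos hint hmean y hy0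
  set c : ℝ := mx / my with hc
  set d : ℝ := (y - x) * mx with hd
  have hcpos : 0 < c := div_pos hmxpos hmypos
  have hdpos : 0 < d := mul_pos (by linarith) hmxpos
  set K : ℝ := -t * Real.exp (-t * max 0 ((c - 1) / d)) with hK
  -- pointwise inequality
  have hpoint : ∀ ω, Real.exp (-t * (ξ ω / (1 + y * ξ ω)) / my) ≤
      Real.exp (-t * (ξ ω / (1 + x * ξ ω)) / mx) +
        K * (ξ ω / (1 + y * ξ ω) / my - ξ ω / (1 + x * ξ ω) / mx) := by
    intro ω
    have hdx := aux_den ξ hpos x hx0 ω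
    have hdy := aux_den ξ hpos y hy0 ω
    have hs : 0 ≤ ξ ω / (1 + x * ξ ω) / mx :=
      div_nonneg (div_nonneg (hpos ω) hdx.le) hmxpos.le
    have hkey := key_ineq t ht c d (ξ ω / (1 + x * ξ ω) / mx) hcpos hdpos hs
    have heq : c * (ξ ω / (1 + x * ξ ω) / mx) / (1 + d * (ξ ω / (1 + x * ξ ω) / mx)) =
        ξ ω / (1 + y * ξ ω) / my := by
      have e1 : 1 + d * (ξ ω / (1 + x * ξ ω) / mx) = (1 + y * ξ ω) / (1 + x * ξ ω) := by
        rw [hd]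
        field_simp [hdx.ne', hmxpos.ne']
        ring
      rw [e1, hc]
      field_simp [hdx.ne', hdy.ne', hmxpos.ne', hmypos.ne', (mul_comm x (ξ ω) ▸ hdx).ne',
        (mul_comm y (ξ ω) ▸ hdy).ne']
    rw [heq] at hkey
    have harg : -t * (ξ ω / (1 + x * ξ ω) / mx) = -t * (ξ ω / (1 + x * ξ ω)) / mx := by
      rw [mul_div_assoc]
    have harg2 : -t * (ξ ω / (1 + y * ξ ω) / my) = -t * (ξ ω / (1 + y * ξ ω)) / my := by
      rw [mul_div_assoc]
    rw [harg, harg2] at hkey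
    exact hkey
  -- integrability facts
  have hIy := aux_exp_int μ ξ hmeas hpos t ht y my hy0 hmypos
  have hIx := aux_exp_int μ ξ hmeas hpos t ht x mx hx0 hmxpos
  have hIgy := (aux_int μ ξ hmeas hpos hint y hy0).div_const my
  have hIgx := (aux_int μ ξ hmeas hpos hint x hx0).div_const mx
  have hIKdiff : Integrable (fun ω => K * (ξ ω / (1 + y * ξ ω) / my - ξ ω / (1 + x * ξ ω) / mx)) μ :=
    (hIgy.sub hIgx).const_mul K
  have hIsum : Integrable (fun ω => Real.exp (-t * (ξ ω / (1 + x * ξ ω)) / mx) +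
      K * (ξ ω / (1 + y * ξ ω) / my - ξ ω / (1 + x * ξ ω) / mx)) μ :=
    hIx.add hIKdiff
  calc ∫ ω, Real.exp (-t * (ξ ω / (1 + y * ξ ω)) / my) ∂μ
      ≤ ∫ ω, (Real.exp (-t * (ξ ω / (1 + x * ξ ω)) / mx) +
          K * (ξ ω / (1 + y * ξ ω) / my - ξ ω / (1 + x * ξ ω) / mx)) ∂μ :=
        integral_mono hIy hIsum hpoint
    _ = (∫ ω, Real.exp (-t * (ξ ω / (1 + x * ξ ω)) / mx) ∂μ) +
          K * ((∫ ω, ξ ω / (1 + y * ξ ω) ∂μ) / my - (∫ ω, ξ ω / (1 + x * ξ ω) ∂μ) / mx) := by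
        rw [integral_add hIx hIKdiff, integral_const_mul K _,
          integral_sub hIgy hIgx, integral_div, integral_div]
    _ = ∫ ω, Real.exp (-t * (ξ ω / (1 + x * ξ ω)) / mx) ∂μ := by
        rw [← hmx, ← hmy, div_self hmypos.ne', div_self hmxpos.ne']
        ring
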